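/- Let (M,g) be a Riemannian manifold, φ a smooth function with ∇²φ = h·g for a smooth function h, and suppose the Ricci tensor satisfies Ric = c·g for a constant c (Einstein), with dim M = m. Then dh = -(c/(m-1)) dφ, i.e., grad h = -(c/(m-1)) grad φ. -/

import Mathlib

/-- **Einstein manifolds and conformal Hessians.** If `∇²φ = h·g` on an
`m`-dimensional Einstein manifold with `Ric = c·g`, then
`dh = -(c/(m-1)) dφ`. The Riemannian data is encoded abstractly via vector
fields `VF` over the ring `C(M,ℝ)` with metric `g`, derivation action `act`,
Lie bracket `bracket`, Levi-Civita connection `nabla` and a global orthonormal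
frame `e` (in which the Ricci trace is computed). -/
theorem einstein_conformal_hessian_gradient
    {M : Type*} [TopologicalSpace M] [ConnectedSpace M]
    {VF : Type*} [AddCommGroup VF] [Module C(M, ℝ) VF]
    (g : VF →ₗ[C(M, ℝ)] VF →ₗ[C(M, ℝ)] C(M, ℝ))
    (gsymm : ∀ X Y : VF, g X Y = g Y X)
    (act : VF → C(M, ℝ) → C(M, ℝ))
    (act_add : ∀ (X : VF) (f₁ f₂ : C(M, ℝ)), act X (f₁ + f₂) = act X f₁ + act X f₂)
    (act_leibniz : ∀ (X : VF) (f₁ f₂ : C(M, ℝ)),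
      act X (f₁ * f₂) = act X f₁ * f₂ + f₁ * act X f₂)
    (act_addX : ∀ (X Y : VF) (f : C(M, ℝ)), act (X + Y) f = act X f + act Y f)
    (act_smulX : ∀ (c : C(M, ℝ)) (X : VF) (f : C(M, ℝ)), act (c • X) f = c * act X f)
    (bracket : VF → VF → VF)
    (bracket_act : ∀ (X Y : VF) (f : C(M, ℝ)),
      act (bracket X Y) f = act X (act Y f) - act Y (act X f))
    (nabla : VF → VF → VF)
    (nabla_add₁ : ∀ X Y Z : VF, nabla (X + Y) Z = nabla X Z + nabla Y Z)
    (nabla_smul₁ : ∀ (f : C(M, ℝ)) (X Y : VF), nabla (f • X) Y = f • nabla X Y)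
    (nabla_add₂ : ∀ X Y Z : VF, nabla X (Y + Z) = nabla X Y + nabla X Z)
    (nabla_leibniz : ∀ (X : VF) (f : C(M, ℝ)) (Y : VF),
      nabla X (f • Y) = act X f • Y + f • nabla X Y)
    (torsion_free : ∀ X Y : VF, nabla X Y - nabla Y X = bracket X Y)
    (metric_compat : ∀ X Y Z : VF,
      act X (g Y Z) = g (nabla X Y) Z + g Y (nabla X Z))
    (m : ℕ) (hm : 2 ≤ m)
    (e : Fin m → VF)
    (e_orthonormal : ∀ a b : Fin m, g (e a) (e b) = if a = b then 1 else 0)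
    (e_frame : ∀ X : VF, X = ∑ a : Fin m, g X (e a) • e a)
    (c : ℝ)
    (einstein : ∀ X Y : VF,
      (∑ a : Fin m, g (nabla (e a) (nabla X Y) - nabla X (nabla (e a) Y)
          - nabla (bracket (e a) X) Y) (e a)) = c • g X Y)
    (φ h : C(M, ℝ))
    (hhess : ∀ X Y : VF, act X (act Y φ) - act (nabla X Y) φ = h * g X Y) :
    ∀ X : VF, act X h = (-(c / ((m : ℝ) - 1))) • act X φ := by
  intro X
  -- `act` is additive in the vector-field slot
  have actX0 : ∀ f : C(M, ℝ), act (0 : VF) f = 0 := by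
    intro f
    have h0 := act_addX 0 0 f
    rw [add_zero] at h0
    exact (left_eq_add.mp h0)
  let F : C(M, ℝ) → VF →+ C(M, ℝ) := fun f =>
    AddMonoidHom.mk' (fun Y => act Y f) (fun a b => act_addX a b f)
  have act_sub : ∀ (A B : VF) (f : C(M, ℝ)), act (A - B) f = act A f - act B f :=
    fun A B f => map_sub (F f) A B
  have act_sumX : ∀ (f : C(M, ℝ)) (v : Fin m → VF),
      act (∑ a, v a) f = ∑ a, act (v a) f :=
    fun f v => map_sum (F f) v Finset.univ
  -- expansion of a derivative in the frame
  have act_expand : ∀ (W : VF) (f : C(M, ℝ)), act W f = ∑ a, g W (e a) * act (e a) f := by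
    intro W f
    conv_lhs => rw [e_frame W]
    rw [act_sumX]
    exact Finset.sum_congr rfl fun a _ => act_smulX _ _ _
  -- derivatives of constants
  have act_one : ∀ Y : VF, act Y (1 : C(M, ℝ)) = 0 := by
    intro Y
    have h1 := act_leibniz Y 1 1
    rw [one_mul, mul_one, one_mul] at h1
    exact (left_eq_add.mp h1)
  have act_zero : ∀ Y : VF, act Y (0 : C(M, ℝ)) = 0 := by
    intro Y
    have h1 := act_add Y 0 0
    rw [add_zero] at h1
    exact (left_eq_add.mp h1)
  have act_negone : ∀ Y : VF, act Y (-1 : C(M, ℝ)) = 0 := by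
    intro Y
    have h1 := act_add Y 1 (-1)
    rw [add_neg_cancel, act_zero, act_one, zero_add] at h1
    exact h1.symm
  -- subtraction rules for `nabla`
  have nabla_neg₂ : ∀ A B : VF, nabla A (-B) = -nabla A B := by
    intro A B
    have hlb := nabla_leibniz A (-1) B
    simp only [neg_one_smul, act_negone, zero_smul, zero_add] at hlb
    exact hlb
  have nabla_sub₂ : ∀ A B C : VF, nabla A (B - C) = nabla A B - nabla A C := by
    intro A B C
    rw [sub_eq_add_neg, nabla_add₂, nabla_neg₂, ← sub_eq_add_neg]
  -- bilinearity of the metric on differences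
  have gsub₁ : ∀ A B C : VF, g (A - B) C = g A C - g B C := by
    intro A B C
    rw [map_sub]; rfl
  have gsub₂ : ∀ A B C : VF, g A (B - C) = g A B - g A C :=
    fun A B C => map_sub (g A) B C
  -- rewriting the Hessian equation
  have hhess' : ∀ A B : VF, act A (act B φ) = act (nabla A B) φ + h * g A B := by
    intro A B
    have h1 := hhess A B
    linear_combination h1
  -- expansion of third derivative of φ
  have expand : ∀ A B Z : VF,
      act A (act B (act Z φ)) =
        act (nabla A (nabla B Z)) φ + h * g A (nabla B Z)
          + (act A h * g B Z + h * (g (nabla A B) Z + g B (nabla A Z))) := by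
    intro A B Z
    calc act A (act B (act Z φ))
        = act A (act (nabla B Z) φ + h * g B Z) := by rw [hhess' B Z]
      _ = act A (act (nabla B Z) φ) + act A (h * g B Z) := act_add _ _ _
      _ = _ := by
          rw [hhess' A (nabla B Z), act_leibniz A h (g B Z), metric_compat A B Z]
  -- Key identity (I): the Ricci identity for the conformal Hessian
  have keyI : ∀ A B Z : VF,
      act A h * g B Z - act B h * g A Z =
        - act (nabla A (nabla B Z) - nabla B (nabla A Z) - nabla (bracket A B) Z) φ := by
    intro A B Z
    have hbr : act (bracket A B) (act Z φ) =
        act (nabla (bracket A B) Z) φ + h * (g (nabla A B) Z - g (nabla B A) Z) := by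
      have h2 := hhess' (bracket A B) Z
      have h3 : g (bracket A B) Z = g (nabla A B) Z - g (nabla B A) Z := by
        rw [← torsion_free, gsub₁]
      rw [h2, h3]
    have hbr2 := bracket_act A B (act Z φ)
    rw [act_sub, act_sub]
    linear_combination (expand B A Z) - (expand A B Z) + hbr - hbr2
  -- Key identity (II): antisymmetry of the curvature in the last two slots
  have keyII : ∀ A B Z W : VF,
      g (nabla A (nabla B Z) - nabla B (nabla A Z) - nabla (bracket A B) Z) W
        + g Z (nabla A (nabla B W) - nabla B (nabla A W) - nabla (bracket A B) W) = 0 := by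
    intro A B Z W
    have c2 : act A (act B (g Z W)) =
        g (nabla A (nabla B Z)) W + g (nabla B Z) (nabla A W)
          + g (nabla A Z) (nabla B W) + g Z (nabla A (nabla B W)) := by
      rw [metric_compat B Z W, act_add, metric_compat A (nabla B Z) W,
        metric_compat A Z (nabla B W)]
      ring
    have c3 : act B (act A (g Z W)) =
        g (nabla B (nabla A Z)) W + g (nabla A Z) (nabla B W)
          + g (nabla B Z) (nabla A W) + g Z (nabla B (nabla A W)) := by
      rw [metric_compat A Z W, act_add, metric_compat B (nabla A Z) W,
        metric_compat B Z (nabla A W)]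
      ring
    have c4 := metric_compat (bracket A B) Z W
    have c5 := bracket_act A B (g Z W)
    rw [gsub₁, gsub₁, gsub₂, gsub₂]
    linear_combination c3 - c2 + c4 - c5
  -- the gradient of φ
  set V : VF := ∑ a, act (e a) φ • e a with hVdef
  have gV : ∀ W : VF, g W V = act W φ := by
    intro W
    rw [hVdef, map_sum, act_expand W φ]
    refine Finset.sum_congr rfl fun a _ => ?_
    rw [map_smul, smul_eq_mul, mul_comm]
  -- the pointwise traced identity
  have key_a : ∀ a : Fin m,
      act (e a) h * g X (e a) - act X h * g (e a) (e a) =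
        g (nabla (e a) (nabla X V) - nabla X (nabla (e a) V)
            - nabla (bracket (e a) X) V) (e a) := by
    intro a
    have k1 := keyI (e a) X (e a)
    have k2 : act (nabla (e a) (nabla X (e a)) - nabla X (nabla (e a) (e a))
        - nabla (bracket (e a) X) (e a)) φ =
        g (nabla (e a) (nabla X (e a)) - nabla X (nabla (e a) (e a))
          - nabla (bracket (e a) X) (e a)) V := (gV _).symm
    have k3 := keyII (e a) X (e a) V
    have k4 : g (e a) (nabla (e a) (nabla X V) - nabla X (nabla (e a) V)
        - nabla (bracket (e a) X) V) =
        g (nabla (e a) (nabla X V) - nabla X (nabla (e a) V)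
          - nabla (bracket (e a) X) V) (e a) := gsymm _ _
    linear_combination k1 - k2 - k3 + k4
  -- summing over the frame
  have s1 : ∑ a, act (e a) h * g X (e a) = act X h := by
    rw [act_expand X h]
    exact Finset.sum_congr rfl fun a _ => mul_comm _ _
  have s2 : ∑ a, g (e a) (e a) = (m : C(M, ℝ)) := by
    simp [e_orthonormal]
  have key_sum : act X h - act X h * (m : C(M, ℝ)) = c • act X φ := by
    have S : (∑ a, (act (e a) h * g X (e a) - act X h * g (e a) (e a))) =
        ∑ a, g (nabla (e a) (nabla X V) - nabla X (nabla (e a) V)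
          - nabla (bracket (e a) X) V) (e a) :=
      Finset.sum_congr rfl fun a _ => key_a a
    rw [Finset.sum_sub_distrib, ← Finset.mul_sum, s1, s2, einstein X V, gV X] at S
    exact S
  -- final scalar manipulation
  have hr : (2 : ℝ) ≤ (m : ℝ) := by exact_mod_cast hm
  have h1m : ((1 : ℝ) - (m : ℝ)) ≠ 0 := by
    intro hh; linarith
  have hm' : ((m : ℝ)) • act X h = act X h * (m : C(M, ℝ)) := by
    rw [Algebra.smul_def, map_natCast, mul_comm]
  have E2 : ((1 : ℝ) - (m : ℝ)) • act X h = c • act X φ := by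
    rw [sub_smul, one_smul, hm']
    exact key_sum
  have E3 : act X h = (((1 : ℝ) - (m : ℝ))⁻¹ * c) • act X φ := by
    calc act X h = ((1 : ℝ) - (m : ℝ))⁻¹ • (((1 : ℝ) - (m : ℝ)) • act X h) := by
          rw [smul_smul, inv_mul_cancel₀ h1m, one_smul]
      _ = ((1 : ℝ) - (m : ℝ))⁻¹ • (c • act X φ) := by rw [E2]
      _ = _ := by rw [smul_smul]
  rw [E3]
  congr 1
  have hm1 : (m : ℝ) - 1 ≠ 0 := by intro hh; linarith
  field_simp
  ring
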